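/- Let K be a real quadratic field with ring of integers R, and let α ∈ R be a unit of norm -1. Suppose 𝔭 is a prime ideal of R dividing α^n - 1 such that the multiplicative order of α modulo 𝔭 is exactly n. If 𝔭 divides β^m - 1 for some 0 < m < n, where β is the conjugate of α, then n = 2m and m is odd. -/

import Mathlib

open NumberField

/-- If `α` is a unit of norm -1 in a real quadratic field, `𝔭` a prime ideal dividing
`α^n - 1` such that the multiplicative order of `α` mod `𝔭` is exactly `n` (i.e. `𝔭` divides
no `α^m - 1` with `0 < m < n`), and `𝔭` divides `β^m - 1` for some `0 < m < n` where `β` is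
the conjugate of `α`, then `n = 2m` and `m` is odd. -/
theorem norm_neg_one_unit_conj_divisor (K : Type*) [Field K] [NumberField K]
    (hdeg : Module.finrank ℚ K = 2) (σ : K →+* ℝ)
    (α : (RingOfIntegers K)ˣ)
    (hnorm : Algebra.norm ℤ ((α : RingOfIntegers K)) = -1)
    (τ : K ≃ₐ[ℚ] K) (hτ : τ ≠ AlgEquiv.refl)
    (β : RingOfIntegers K) (hβ : (β : K) = τ (((α : RingOfIntegers K) : K)))
    (P : Ideal (RingOfIntegers K)) (hP : P.IsPrime)
    (n : ℕ) (hn : 0 < n)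
    (hmem : (α : RingOfIntegers K) ^ n - 1 ∈ P)
    (hord : ∀ m : ℕ, 0 < m → m < n → (α : RingOfIntegers K) ^ m - 1 ∉ P)
    (m : ℕ) (hm0 : 0 < m) (hmn : m < n)
    (hβm : β ^ m - 1 ∈ P) :
    n = 2 * m ∧ Odd m := by
  classical
  set a : K := ((α : RingOfIntegers K) : K) with ha
  -- the norm of `a` over ℚ is -1
  have hnormQ : Algebra.norm ℚ a = -1 := by
    have h := Algebra.coe_norm_int (K := K) (α : RingOfIntegers K)
    rw [hnorm] at h
    simpa using h.symm
  have hai : IsIntegral ℚ a := IsIntegral.of_finite ℚ a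
  -- `a` is not rational
  have hnotmem : a ∉ (algebraMap ℚ K).range := by
    rintro ⟨q, hq⟩
    have h := Algebra.norm_algebraMap (S := K) q
    rw [hq, hnormQ, hdeg] at h
    nlinarith [sq_nonneg q]
  -- the minimal polynomial of `a` has degree two
  have hd2 : (minpoly ℚ a).natDegree = 2 := by
    have h2le : 2 ≤ (minpoly ℚ a).natDegree :=
      (minpoly.two_le_natDegree_iff hai).mpr hnotmem
    have hle : (minpoly ℚ a).natDegree ≤ 2 := hdeg ▸ minpoly.natDegree_le a
    omega
  have htop : IntermediateField.adjoin ℚ {a} = ⊤ :=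
    (Field.primitive_element_iff_minpoly_natDegree_eq ℚ a).mpr (by rw [hd2, hdeg])
  -- `τ a ≠ a`
  have halgtop : Algebra.adjoin ℚ {a} = ⊤ := by
    have h := congrArg IntermediateField.toSubalgebra htop
    rwa [IntermediateField.adjoin_simple_toSubalgebra_of_isAlgebraic hai.isAlgebraic,
      IntermediateField.top_toSubalgebra] at h
  have hτa : τ a ≠ a := by
    intro h
    apply hτ
    have : (τ : K →ₐ[ℚ] K) = ((AlgEquiv.refl : K ≃ₐ[ℚ] K) : K →ₐ[ℚ] K) := by
      apply AlgHom.ext_of_adjoin_eq_top halgtop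
      intro x hx
      simp only [Set.mem_singleton_iff] at hx
      subst hx
      simpa using h
    ext x
    exact congrArg (fun f => f x) this
  -- the coefficient relations from the minimal polynomial
  set p := minpoly ℚ a with hp
  set b : K := τ a with hb
  have hroot_a : Polynomial.aeval a p = 0 := minpoly.aeval ℚ a
  have hroot_b : Polynomial.aeval b p = 0 := by
    have h := Polynomial.aeval_algHom_apply (τ : K →ₐ[ℚ] K) a p
    rw [hroot_a, map_zero] at h
    simpa [hb] using h
  have hmonic : p.Monic := minpoly.monic hai
  have hc2 : p.coeff 2 = 1 := by
    have := hmonic.coeff_natDegree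
    rwa [hd2] at this
  set c0 : ℚ := p.coeff 0 with hc0
  set c1 : ℚ := p.coeff 1 with hc1
  have hexpand : ∀ x : K, Polynomial.aeval x p =
      algebraMap ℚ K c0 + algebraMap ℚ K c1 * x + x ^ 2 := by
    intro x
    rw [Polynomial.aeval_eq_sum_range' (n := 3) (by omega) x]
    rw [Finset.sum_range_succ, Finset.sum_range_succ, Finset.sum_range_succ,
      Finset.sum_range_zero, hc2]
    simp [Algebra.smul_def]
    try ring
  have heqa : algebraMap ℚ K c0 + algebraMap ℚ K c1 * a + a ^ 2 = 0 := by
    rw [← hexpand a]; exact hroot_a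
  have heqb : algebraMap ℚ K c0 + algebraMap ℚ K c1 * b + b ^ 2 = 0 := by
    rw [← hexpand b]; exact hroot_b
  -- sum of roots
  have hsum : algebraMap ℚ K c1 = -(a + b) := by
    have hsub : (a - b) * (algebraMap ℚ K c1 + (a + b)) = 0 := by
      have := sub_eq_zero.mpr (heqa.trans heqb.symm)
      linear_combination this
    have hne : a - b ≠ 0 := sub_ne_zero.mpr (fun h => hτa h.symm)
    have := (mul_eq_zero.mp hsub).resolve_left hne
    linear_combination this
  -- product of roots
  have hprod : a * b = algebraMap ℚ K c0 := by
    have : a * (algebraMap ℚ K c1 + a) = -algebraMap ℚ K c0 := by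
      linear_combination heqa
    rw [hsum] at this
    linear_combination -this
  -- c0 = -1 via the norm
  have hc0_neg : c0 = -1 := by
    let e : (IntermediateField.adjoin ℚ {a}) ≃ₐ[ℚ] K :=
      (IntermediateField.equivOfEq htop).trans IntermediateField.topEquiv
    let pb := (IntermediateField.adjoin.powerBasis hai).map e
    have hgen : pb.gen = a := by
      simp [pb, e, IntermediateField.adjoin.powerBasis_gen]
    have hdim : pb.dim = 2 := by
      simp [pb, PowerBasis.map, IntermediateField.adjoin.powerBasis_dim, hd2]; exact hd2
    have h := Algebra.PowerBasis.norm_gen_eq_coeff_zero_minpoly pb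
    rw [hgen, hdim, hnormQ] at h
    have : (-1 : ℚ) = c0 := by simpa using h
    linarith
  have habK : a * b = -1 := by
    rw [hprod, hc0_neg, map_neg, map_one]
  -- lift to the ring of integers
  have hab : (α : RingOfIntegers K) * β = -1 := by
    apply RingOfIntegers.ext
    show algebraMap (RingOfIntegers K) K ((α : RingOfIntegers K) * β)
      = algebraMap (RingOfIntegers K) K (-1)
    rw [map_mul, map_neg, map_one]
    rw [RingOfIntegers.coe_eq_algebraMap] at hβ
    rw [hβ]
    exact habK
  -- key divisibility: if α^k - 1 ∈ P then n ∣ k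
  have key : ∀ k : ℕ, (α : RingOfIntegers K) ^ k - 1 ∈ P → n ∣ k := by
    intro k hk
    have hdvd : (α : RingOfIntegers K) ^ n - 1 ∣ (α : RingOfIntegers K) ^ (n * (k / n)) - 1 := by
      have h := sub_dvd_pow_sub_pow ((α : RingOfIntegers K) ^ n) 1 (k / n)
      simpa [← pow_mul] using h
    obtain ⟨c, hc⟩ := hdvd
    have h1 : (α : RingOfIntegers K) ^ (n * (k / n)) - 1 ∈ P := hc ▸ P.mul_mem_right c hmem
    have h2 : (α : RingOfIntegers K) ^ k - (α : RingOfIntegers K) ^ (k % n) ∈ P := by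
      have heq : (α : RingOfIntegers K) ^ k - (α : RingOfIntegers K) ^ (k % n)
          = (α : RingOfIntegers K) ^ (k % n) * ((α : RingOfIntegers K) ^ (n * (k / n)) - 1) := by
        rw [mul_sub, mul_one, ← pow_add]
        congr 2
        first
        | exact Nat.mod_add_div k n
        | exact (Nat.mod_add_div k n).symm
      rw [heq]
      exact P.mul_mem_left _ h1
    have h3 : (α : RingOfIntegers K) ^ (k % n) - 1 ∈ P := by
      have := P.sub_mem hk h2
      have heq : ((α : RingOfIntegers K) ^ k - 1) - ((α : RingOfIntegers K) ^ k - (α : RingOfIntegers K) ^ (k % n))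
          = (α : RingOfIntegers K) ^ (k % n) - 1 := by ring
      rwa [heq] at this
    by_contra hnd
    have hrpos : 0 < k % n := Nat.pos_of_ne_zero (fun h => hnd (Nat.dvd_of_mod_eq_zero h))
    exact hord _ hrpos (Nat.mod_lt _ hn) h3
  -- translate hβm using the relation α·β = -1
  have hmain : (-1 : RingOfIntegers K) ^ m - (α : RingOfIntegers K) ^ m ∈ P := by
    have heq : (α : RingOfIntegers K) ^ m * (β ^ m - 1) = (-1 : RingOfIntegers K) ^ m - (α : RingOfIntegers K) ^ m := by
      rw [mul_sub, mul_one, ← mul_pow, hab]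
    exact heq ▸ P.mul_mem_left _ hβm
  rcases Nat.even_or_odd m with he | ho
  · exfalso
    have h1 : (α : RingOfIntegers K) ^ m - 1 ∈ P := by
      have := P.neg_mem hmain
      rwa [he.neg_one_pow, neg_sub] at this
    exact hord m hm0 hmn h1
  · have h1 : (α : RingOfIntegers K) ^ m + 1 ∈ P := by
      have := P.neg_mem hmain
      rw [ho.neg_one_pow] at this
      have heq : -(-1 - (α : RingOfIntegers K) ^ m) = (α : RingOfIntegers K) ^ m + 1 := by ring
      rwa [heq] at this
    have h2 : (α : RingOfIntegers K) ^ (2 * m) - 1 ∈ P := by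
      have heq : (α : RingOfIntegers K) ^ (2 * m) - 1 = ((α : RingOfIntegers K) ^ m + 1) * ((α : RingOfIntegers K) ^ m - 1) := by
        rw [two_mul, pow_add]; ring
      rw [heq]
      exact P.mul_mem_right _ h1
    have hdvd := key (2 * m) h2
    have hne : n = 2 * m := (Nat.eq_of_dvd_of_lt_two_mul (by omega) hdvd (by omega)).symm
    exact ⟨hne, ho⟩
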